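/- ε-change preserves leximin improvement: let x, y ∈ ℝ^n with y strictly better than x in the leximin order. Then there exists ε₀ > 0 such that for all ε ∈ (0, ε₀), the vector x + ε(y − x) is strictly better than x in the leximin order. -/

import Mathlib

/-- The non-decreasing rearrangement of a vector. -/
noncomputable def sortVec {n : ℕ} (x : Fin n → ℝ) : Fin n → ℝ := x ∘ Tuple.sort x

/-- Strict leximin order: compare sorted vectors lexicographically. -/
noncomputable def leximinLT {n : ℕ} (x y : Fin n → ℝ) : Prop :=
  toLex (sortVec x) < toLex (sortVec y)

open Finset

/-- number of entries `≤ s` -/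
noncomputable def cntle {n : ℕ} (v : Fin n → ℝ) (s : ℝ) : ℕ :=
  (Finset.univ.filter fun i => v i ≤ s).card

/-- number of entries `< s` -/
noncomputable def cntlt {n : ℕ} (v : Fin n → ℝ) (s : ℝ) : ℕ :=
  (Finset.univ.filter fun i => v i < s).card

lemma cntle_def {n : ℕ} (v : Fin n → ℝ) (s : ℝ) :
    cntle v s = (Finset.univ.filter fun i => v i ≤ s).card := rfl

lemma cntlt_def {n : ℕ} (v : Fin n → ℝ) (s : ℝ) :
    cntlt v s = (Finset.univ.filter fun i => v i < s).card := rfl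

lemma lower_card {n : ℕ} (S : Finset (Fin n))
    (hS : ∀ i j : Fin n, j ≤ i → i ∈ S → j ∈ S) (j : Fin n) :
    (j : ℕ) < S.card ↔ j ∈ S := by
  constructor
  · intro hj
    by_contra hjS
    have hsub : S ⊆ Finset.Iio j := by
      intro i hi
      simp only [Finset.mem_Iio]
      by_contra hij
      exact hjS (hS i j (le_of_not_gt hij) hi)
    have h1 := Finset.card_le_card hsub
    rw [Fin.card_Iio] at h1
    omega
  · intro hj
    have hsub : Finset.Iic j ⊆ S := fun i hi => hS j i (Finset.mem_Iic.mp hi) hj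
    have h1 := Finset.card_le_card hsub
    rw [Fin.card_Iic] at h1
    omega

lemma lt_cntle_iff {n : ℕ} {g : Fin n → ℝ} (hg : Monotone g) (s : ℝ) (j : Fin n) :
    (j : ℕ) < cntle g s ↔ g j ≤ s := by
  have := lower_card (Finset.univ.filter fun i => g i ≤ s)
    (fun i k hki hi => by
      simp only [Finset.mem_filter, Finset.mem_univ, true_and] at hi ⊢
      exact le_trans (hg hki) hi) j
  simpa [cntle_def] using this

lemma lt_cntlt_iff {n : ℕ} {g : Fin n → ℝ} (hg : Monotone g) (s : ℝ) (j : Fin n) :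
    (j : ℕ) < cntlt g s ↔ g j < s := by
  have := lower_card (Finset.univ.filter fun i => g i < s)
    (fun i k hki hi => by
      simp only [Finset.mem_filter, Finset.mem_univ, true_and] at hi ⊢
      exact lt_of_le_of_lt (hg hki) hi) j
  simpa [cntlt_def] using this

lemma cnt_comp {n : ℕ} (v : Fin n → ℝ) (σ : Equiv.Perm (Fin n)) (P : ℝ → Prop)
    [DecidablePred P] :
    (Finset.univ.filter fun i => P (v (σ i))).card
      = (Finset.univ.filter fun i => P (v i)).card := by
  rw [← Fintype.card_subtype, ← Fintype.card_subtype]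
  exact Fintype.card_congr (σ.subtypeEquiv fun a => Iff.rfl)

lemma cntle_sortVec {n : ℕ} (v : Fin n → ℝ) (s : ℝ) : cntle (sortVec v) s = cntle v s := by
  classical
  rw [cntle_def, cntle_def]
  exact cnt_comp v (Tuple.sort v) (fun t => t ≤ s)

lemma cntlt_sortVec {n : ℕ} (v : Fin n → ℝ) (s : ℝ) : cntlt (sortVec v) s = cntlt v s := by
  classical
  rw [cntlt_def, cntlt_def]
  exact cnt_comp v (Tuple.sort v) (fun t => t < s)

lemma sortVec_le_iff {n : ℕ} (v : Fin n → ℝ) (s : ℝ) (j : Fin n) :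
    sortVec v j ≤ s ↔ (j : ℕ) < cntle v s := by
  rw [← cntle_sortVec]
  exact (lt_cntle_iff (Tuple.monotone_sort v) s j).symm

lemma sortVec_lt_iff {n : ℕ} (v : Fin n → ℝ) (s : ℝ) (j : Fin n) :
    sortVec v j < s ↔ (j : ℕ) < cntlt v s := by
  rw [← cntlt_sortVec]
  exact (lt_cntlt_iff (Tuple.monotone_sort v) s j).symm

/-- ε-change preserves leximin improvement: if `y` is strictly better than `x` in
the leximin order, then for all sufficiently small `ε > 0`, the vector
`x + ε(y − x)` is also strictly better than `x` in the leximin order. -/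
theorem epsChange_leximin_improvement {n : ℕ} (x y : Fin n → ℝ)
    (h : leximinLT x y) :
    ∃ ε₀ > (0 : ℝ), ∀ ε ∈ Set.Ioo (0 : ℝ) ε₀,
      leximinLT x (fun i => x i + ε * (y i - x i)) := by
  classical
  set D : Finset (Fin n) := Finset.univ.filter (fun i => y i ≠ x i) with hD
  have hDne : D.Nonempty := by
    by_contra hne
    rw [Finset.not_nonempty_iff_eq_empty] at hne
    have hxy : y = x := by
      funext i
      by_contra hi
      have hmem : i ∈ D := by simp [hD, hi]
      simp [hne] at hmem
    rw [leximinLT, hxy] at h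
    exact lt_irrefl _ h
  obtain ⟨i₀, hi₀D, hi₀min⟩ : ∃ i₀ ∈ D, ∀ i ∈ D, x i₀ ≤ x i := D.exists_min_image x hDne
  set w := x i₀ with hw
  have hDle : ∀ i ∈ D, w ≤ x i := fun i hi => hi₀min i hi
  have hnotD : ∀ i, i ∉ D → y i = x i := by
    intro i hi
    by_contra h'
    exact hi (by simp [hD, h'])
  -- Key step: every coordinate in the minimal moving class strictly increases.
  have key : ∀ i ∈ D, x i = w → w < y i := by
    intro i hiD hiw
    by_contra hlt
    have hyne : y i ≠ x i := by simpa [hD] using hiD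
    have hyi : y i < w := lt_of_le_of_ne (not_lt.mp hlt) (by rw [← hiw]; exact hyne)
    have hmn : cntlt x w < n := by
      have hne : (Finset.univ.filter fun k => x k < w) ≠ Finset.univ := by
        intro hEq
        have hi' : i ∈ Finset.univ.filter fun k => x k < w := by
          rw [hEq]; exact Finset.mem_univ i
        simp only [Finset.mem_filter, hiw] at hi'
        exact lt_irrefl w hi'.2
      have := Finset.card_lt_card ((Finset.ssubset_univ_iff).mpr hne)
      simpa [cntlt_def, Finset.card_univ] using this
    set M : Fin n := ⟨cntlt x w, hmn⟩ with hM
    have hxM : w ≤ sortVec x M := by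
      by_contra hc
      rw [not_le] at hc
      have := (sortVec_lt_iff x w M).mp hc
      simp [hM] at this
    have hyM : sortVec y M < w := by
      rw [sortVec_lt_iff]
      have hnotmem : i ∉ Finset.univ.filter fun k => x k < w := by
        simp [hiw]
      have hsub : insert i (Finset.univ.filter fun k => x k < w)
          ⊆ Finset.univ.filter (fun k => y k < w) := by
        intro k hk
        rcases Finset.mem_insert.mp hk with rfl | hk
        · simp [hyi]
        · simp only [Finset.mem_filter, Finset.mem_univ, true_and] at hk ⊢
          have hkD : k ∉ D := fun hkD => absurd (hDle k hkD) (not_le.mpr hk)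
          rw [hnotD k hkD]
          exact hk
      have hcard := Finset.card_le_card hsub
      rw [Finset.card_insert_of_notMem hnotmem] at hcard
      show cntlt x w < cntlt y w
      rw [cntlt_def, cntlt_def]
      omega
    have hle : ∀ j : Fin n, j < M → sortVec y j ≤ sortVec x j := by
      intro j hj
      have hjv : (j : ℕ) < cntlt x w := hj
      have hsxj : sortVec x j < w := (sortVec_lt_iff x w j).mpr hjv
      have h1 : (j : ℕ) < cntle x (sortVec x j) := (sortVec_le_iff x _ j).mp le_rfl
      have hsub : (Finset.univ.filter fun k => x k ≤ sortVec x j)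
          ⊆ (Finset.univ.filter fun k => y k ≤ sortVec x j) := by
        intro k hk
        simp only [Finset.mem_filter, Finset.mem_univ, true_and] at hk ⊢
        have hkw : x k < w := lt_of_le_of_lt hk hsxj
        have hkD : k ∉ D := fun hkD => absurd (hDle k hkD) (not_le.mpr hkw)
        rw [hnotD k hkD]
        exact hk
      rw [sortVec_le_iff]
      calc (j : ℕ) < cntle x (sortVec x j) := h1
        _ ≤ cntle y (sortVec x j) := by
            rw [cntle_def, cntle_def]; exact Finset.card_le_card hsub
    obtain ⟨k, hpre, hk⟩ := h
    have hk' : sortVec x k < sortVec y k := hk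
    rcases lt_trichotomy k M with hkM | hkM | hMk
    · exact absurd hk' (not_lt.mpr (hle k hkM))
    · subst hkM
      exact absurd hk' (not_lt.mpr (le_of_lt (lt_of_lt_of_le hyM hxM)))
    · have hEq : sortVec x M = sortVec y M := hpre M hMk
      rw [hEq] at hxM
      exact absurd hyM (not_lt.mpr hxM)
  -- choose ε₀
  set g : Fin n → ℝ := fun i => if w < x i then (x i - w) / (|y i - x i| + 1) else 1 with hg
  have hgpos : ∀ i, 0 < g i := by
    intro i
    simp only [hg]
    split
    · apply div_pos (by linarith) (by positivity)
    · exact one_pos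
  refine ⟨Finset.univ.inf' ⟨i₀, Finset.mem_univ i₀⟩ g, ?_, ?_⟩
  · rw [gt_iff_lt]; refine (Finset.lt_inf'_iff (H := _)).mpr ?_
    intro i _
    exact hgpos i
  intro ε hε
  obtain ⟨hε0, hεlt⟩ := hε
  set z : Fin n → ℝ := fun i => x i + ε * (y i - x i) with hz
  have hznD : ∀ i, i ∉ D → z i = x i := by
    intro i hi
    simp [hz, hnotD i hi]
  have hzlt : ∀ i, x i < w → z i = x i := fun i hi =>
    hznD i (fun hiD => absurd (hDle i hiD) (not_le.mpr hi))
  have hzeqD : ∀ i, x i = w → i ∈ D → w < z i := by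
    intro i hiw hiD
    have hy := key i hiD hiw
    have hpos : 0 < ε * (y i - x i) := mul_pos hε0 (by rw [hiw]; linarith)
    have : w < x i + ε * (y i - x i) := by rw [hiw] at *; linarith
    simpa [hz] using this
  have hzgt : ∀ i, w < x i → w < z i := by
    intro i hi
    have hgi : ε < g i := lt_of_lt_of_le hεlt (Finset.inf'_le _ (Finset.mem_univ i))
    rw [hg] at hgi
    simp only [if_pos hi] at hgi
    have h1 : ε * (|y i - x i| + 1) < x i - w := by
      rw [lt_div_iff₀ (by positivity)] at hgi
      linarith
    have habs : -|y i - x i| ≤ y i - x i := neg_abs_le _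
    have h2 : ε * (-|y i - x i|) ≤ ε * (y i - x i) := mul_le_mul_of_nonneg_left habs hε0.le
    have : w < x i + ε * (y i - x i) := by nlinarith [abs_nonneg (y i - x i)]
    simpa [hz] using this
  set p := cntlt x w with hp
  have hset_lt : (Finset.univ.filter fun i => z i < w) = (Finset.univ.filter fun i => x i < w) := by
    ext i
    simp only [Finset.mem_filter, Finset.mem_univ, true_and]
    constructor
    · intro hzi
      rcases lt_trichotomy (x i) w with hc | hc | hc
      · exact hc
      · rcases em (i ∈ D) with hiD | hiD
        · exact absurd hzi (not_lt.mpr (le_of_lt (hzeqD i hc hiD)))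
        · rw [hznD i hiD, hc] at hzi
          exact absurd hzi (lt_irrefl w)
      · exact absurd hzi (not_lt.mpr (le_of_lt (hzgt i hc)))
    · intro hxi
      rw [hzlt i hxi]
      exact hxi
  have hczlt : cntlt z w = p := by
    rw [cntlt_def, hset_lt, hp, cntlt_def]
  have hset_le : ∀ s, s < w →
      (Finset.univ.filter fun i => z i ≤ s) = (Finset.univ.filter fun i => x i ≤ s) := by
    intro s hs
    ext i
    simp only [Finset.mem_filter, Finset.mem_univ, true_and]
    constructor
    · intro hzi
      rcases lt_trichotomy (x i) w with hc | hc | hc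
      · rw [hzlt i hc] at hzi
        exact hzi
      · rcases em (i ∈ D) with hiD | hiD
        · exact absurd hzi (not_le.mpr (hs.trans (hzeqD i hc hiD)))
        · rw [hznD i hiD, hc] at hzi
          exact absurd (lt_of_le_of_lt hzi hs) (lt_irrefl w)
      · exact absurd hzi (not_le.mpr (hs.trans (hzgt i hc)))
    · intro hxi
      have hc : x i < w := lt_of_le_of_lt hxi hs
      rw [hzlt i hc]
      exact hxi
  have hcle_eq : ∀ s, s < w → cntle z s = cntle x s := by
    intro s hs
    rw [cntle_def, hset_le s hs, cntle_def]
  set Q := Finset.univ.filter (fun i => x i = w ∧ i ∉ D) with hQ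
  have hdisj : Disjoint (Finset.univ.filter fun i => x i < w) Q := by
    rw [Finset.disjoint_left]
    intro a ha haQ
    simp only [Finset.mem_filter, Finset.mem_univ, true_and] at ha
    simp only [hQ, Finset.mem_filter, Finset.mem_univ, true_and] at haQ
    rw [haQ.1] at ha
    exact lt_irrefl w ha
  have hcle : cntle z w = p + Q.card := by
    rw [cntle_def]
    have hunion : (Finset.univ.filter fun i => z i ≤ w)
        = (Finset.univ.filter fun i => x i < w) ∪ Q := by
      ext i
      simp only [Finset.mem_union, Finset.mem_filter, Finset.mem_univ, true_and, hQ]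
      constructor
      · intro hzi
        rcases lt_trichotomy (x i) w with hc | hc | hc
        · exact Or.inl hc
        · rcases em (i ∈ D) with hiD | hiD
          · exact absurd hzi (not_le.mpr (hzeqD i hc hiD))
          · exact Or.inr ⟨hc, hiD⟩
        · exact absurd hzi (not_le.mpr (hzgt i hc))
      · rintro (hc | ⟨hc, hiD⟩)
        · rw [hzlt i hc]
          exact le_of_lt hc
        · rw [hznD i hiD, hc]
    rw [hunion, Finset.card_union_of_disjoint hdisj, hp, cntlt_def]
  have hi₀w : x i₀ = w := hw.symm
  have hi₀notmem : i₀ ∉ (Finset.univ.filter fun i => x i < w) ∪ Q := by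
    intro hmem
    rcases Finset.mem_union.mp hmem with hmem | hmem
    · simp only [Finset.mem_filter, Finset.mem_univ, true_and, hi₀w] at hmem
      exact lt_irrefl w hmem
    · simp only [hQ, Finset.mem_filter, Finset.mem_univ, true_and] at hmem
      exact hmem.2 hi₀D
  have hbound : p + Q.card + 1 ≤ cntle x w := by
    have hsub : insert i₀ ((Finset.univ.filter fun i => x i < w) ∪ Q)
        ⊆ Finset.univ.filter (fun i => x i ≤ w) := by
      intro k hk
      rcases Finset.mem_insert.mp hk with rfl | hk
      · simp [hi₀w]
      · rcases Finset.mem_union.mp hk with hk | hk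
        · simp only [Finset.mem_filter, Finset.mem_univ, true_and] at hk ⊢
          exact le_of_lt hk
        · simp only [hQ, Finset.mem_filter, Finset.mem_univ, true_and] at hk ⊢
          exact le_of_eq hk.1
    have hcard := Finset.card_le_card hsub
    rw [Finset.card_insert_of_notMem hi₀notmem, Finset.card_union_of_disjoint hdisj] at hcard
    rw [cntle_def, hp, cntlt_def]
    omega
  have hcle_n : cntle x w ≤ n := by
    rw [cntle_def]
    calc (Finset.univ.filter fun i => x i ≤ w).card ≤ Finset.univ.card :=
          Finset.card_filter_le _ _
      _ = n := by simp
  have hKn : p + Q.card < n := by omega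
  set K : Fin n := ⟨p + Q.card, hKn⟩ with hK
  show toLex (sortVec x) < toLex (sortVec z)
  refine ⟨K, ?_, ?_⟩
  · intro j hj
    show sortVec x j = sortVec z j
    have hjv : (j : ℕ) < p + Q.card := hj
    rcases lt_or_ge (j : ℕ) p with hjp | hjp
    · have hx1 : sortVec x j < w := (sortVec_lt_iff x w j).mpr hjp
      have hz1 : sortVec z j < w := (sortVec_lt_iff z w j).mpr (by rw [hczlt]; exact hjp)
      have hA : sortVec z j ≤ sortVec x j := by
        rw [sortVec_le_iff, hcle_eq _ hx1]
        exact (sortVec_le_iff x _ j).mp le_rfl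
      have hB : sortVec x j ≤ sortVec z j := by
        rw [sortVec_le_iff]
        have h1 : (j : ℕ) < cntle z (sortVec z j) := (sortVec_le_iff z _ j).mp le_rfl
        rw [hcle_eq _ hz1] at h1
        exact h1
      exact le_antisymm hB hA
    · have hx1 : w ≤ sortVec x j := by
        by_contra hc
        rw [not_le] at hc
        have := (sortVec_lt_iff x w j).mp hc
        rw [← hp] at this
        omega
      have hx2 : sortVec x j ≤ w := by
        rw [sortVec_le_iff]
        omega
      have hz1 : w ≤ sortVec z j := by
        by_contra hc
        rw [not_le] at hc
        have := (sortVec_lt_iff z w j).mp hc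
        rw [hczlt] at this
        omega
      have hz2 : sortVec z j ≤ w := by
        rw [sortVec_le_iff, hcle]
        omega
      rw [le_antisymm hx2 hx1, le_antisymm hz2 hz1]
  · show sortVec x K < sortVec z K
    have h1 : sortVec x K ≤ w := by
      rw [sortVec_le_iff]
      show (K : ℕ) < cntle x w
      simp only [hK]
      omega
    have h2 : w < sortVec z K := by
      by_contra hc
      rw [not_lt] at hc
      have := (sortVec_le_iff z w K).mp hc
      rw [hcle] at this
      simp only [hK] at this
      omega
    exact lt_of_le_of_lt h1 h2
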